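/- Let k ≥ 3, P a nonempty finite set, and nor⁰ defined as: nor⁰(F) = 0 if |P| ≥ ‖F‖·k^(3^k−1), else k − log₃(log_k(k·|P|/‖F‖)). If F : P → [0,1] is not identically zero and F' ≤ F pointwise with ‖F'‖ ≥ ‖F‖/k, then nor⁰(F') ≥ nor⁰(F) − 1. -/

import Mathlib

open Finset

/-- The creature norm nor⁰ with parameter k on weight functions F : P → [0,1]. -/
noncomputable def nor0 (k : ℕ) {P : Type*} [Fintype P] (F : P → ℝ) : ℝ :=
  if (Fintype.card P : ℝ) ≥ (∑ h, F h) * (k : ℝ) ^ (3 ^ k - 1) then 0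
  else (k : ℝ) - Real.logb 3 (Real.logb k ((k : ℝ) * (Fintype.card P : ℝ) / ∑ h, F h))

set_option maxHeartbeats 1000000 in
theorem nor0_bigness (k : ℕ) (hk : 3 ≤ k) {P : Type*} [Fintype P] [Nonempty P]
    (F F' : P → ℝ)
    (hF : ∀ h, F h ∈ Set.Icc (0:ℝ) 1) (hF' : ∀ h, F' h ∈ Set.Icc (0:ℝ) 1)
    (hz : ∃ h, F h ≠ 0) (hz' : ∃ h, F' h ≠ 0)
    (hle : ∀ h, F' h ≤ F h)
    (hsum : (∑ h, F h) / (k : ℝ) ≤ ∑ h, F' h) :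
    nor0 k F - 1 ≤ nor0 k F' := by
  have hk1 : (1:ℝ) < (k:ℝ) := by exact_mod_cast (by omega : 1 < k)
  have hk0 : (0:ℝ) < (k:ℝ) := by linarith
  have hk3 : (3:ℝ) ≤ (k:ℝ) := by exact_mod_cast hk
  have h3k2 : 2 ≤ 3 ^ k := by
    calc 2 ≤ 3 ^ 1 := by norm_num
    _ ≤ 3 ^ k := Nat.pow_le_pow_right (by norm_num) (by omega)
  set N : ℝ := (Fintype.card P : ℝ) with hNdef
  have hN1 : (1:ℝ) ≤ N := by
    have := Fintype.card_pos (α := P)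
    simp only [hNdef]; exact_mod_cast this
  set S := ∑ h, F h with hSdef
  set S' := ∑ h, F' h with hS'def
  have hS0 : 0 < S := by
    obtain ⟨h0, hh0⟩ := hz
    exact Finset.sum_pos' (fun i _ => (hF i).1)
      ⟨h0, Finset.mem_univ _, lt_of_le_of_ne (hF h0).1 (Ne.symm hh0)⟩
  have hS'0 : 0 < S' := by
    obtain ⟨h0, hh0⟩ := hz'
    exact Finset.sum_pos' (fun i _ => (hF' i).1)
      ⟨h0, Finset.mem_univ _, lt_of_le_of_ne (hF' h0).1 (Ne.symm hh0)⟩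
  have hSN : S ≤ N := by
    calc S ≤ ∑ _h : P, (1:ℝ) := Finset.sum_le_sum (fun i _ => (hF i).2)
    _ = N := by simp [hNdef]
  have hS'S : S' ≤ S := Finset.sum_le_sum (fun i _ => hle i)
  have hS'N : S' ≤ N := hS'S.trans hSN
  set x := Real.logb k ((k:ℝ) * N / S) with hxdef
  set x' := Real.logb k ((k:ℝ) * N / S') with hx'def
  have hargS : (k:ℝ) ≤ (k:ℝ) * N / S := by
    rw [le_div_iff₀ hS0]; nlinarith
  have hargS' : (k:ℝ) ≤ (k:ℝ) * N / S' := by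
    rw [le_div_iff₀ hS'0]; nlinarith
  have hx1 : 1 ≤ x := by
    calc (1:ℝ) = Real.logb k k := (Real.logb_self_eq_one hk1).symm
    _ ≤ x := Real.logb_le_logb_of_le hk1 hk0 hargS
  have hx'1 : 1 ≤ x' := by
    calc (1:ℝ) = Real.logb k k := (Real.logb_self_eq_one hk1).symm
    _ ≤ x' := Real.logb_le_logb_of_le hk1 hk0 hargS'
  -- x' ≤ 1 + x
  have hx'le : x' ≤ 1 + x := by
    have harg : (k:ℝ) * N / S' ≤ (k:ℝ) * ((k:ℝ) * N / S) := by
      rw [div_le_iff₀ hS'0]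
      have h1 : S ≤ (k:ℝ) * S' := by
        rw [div_le_iff₀ hk0] at hsum; linarith [hsum]
      have h2 : (k:ℝ) * ((k:ℝ) * N / S) * S' = (k:ℝ) * N * ((k:ℝ) * S') / S := by
        field_simp
      rw [h2, le_div_iff₀ hS0]
      have hkN : 0 < (k:ℝ) * N := by positivity
      nlinarith
    calc x' ≤ Real.logb k ((k:ℝ) * ((k:ℝ) * N / S)) :=
          Real.logb_le_logb_of_le hk1 (by positivity) harg
    _ = 1 + x := by
        rw [Real.logb_mul (ne_of_gt hk0) (by positivity), Real.logb_self_eq_one hk1]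
  unfold nor0
  split_ifs with h1 h2 h2
  · norm_num
  · -- nor0 F = 0, F' else branch: show -1 ≤ k - logb 3 x'
    have hlt : N < S' * (k:ℝ) ^ (3 ^ k - 1) := not_le.mp h2
    have hx'lt : x' < (3:ℝ) ^ k := by
      have harg : (k:ℝ) * N / S' < (k:ℝ) ^ (3 ^ k : ℕ) := by
        rw [div_lt_iff₀ hS'0]
        have : (k:ℝ) ^ (3 ^ k : ℕ) = (k:ℝ) ^ (3 ^ k - 1) * k := by
          rw [← pow_succ]; congr 1; omega
        rw [this]; nlinarith [pow_pos hk0 (3 ^ k - 1)]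
      calc x' < Real.logb k ((k:ℝ) ^ (3 ^ k : ℕ)) :=
            Real.logb_lt_logb hk1 (by positivity) harg
      _ = (3:ℝ) ^ k := by
          rw [Real.logb_pow, Real.logb_self_eq_one hk1]; push_cast; ring
    have : Real.logb 3 x' < (k:ℝ) := by
      calc Real.logb 3 x' < Real.logb 3 ((3:ℝ) ^ k) :=
            Real.logb_lt_logb (by norm_num) (by linarith) hx'lt
      _ = k := by rw [Real.logb_pow, Real.logb_self_eq_one (by norm_num)]; ring
    linarith
  · -- F else, F' if: show k - logb 3 x - 1 ≤ 0
    have hge : S' * (k:ℝ) ^ (3 ^ k - 1) ≤ N := h2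
    have hxge : ((3:ℝ) ^ k - 1 : ℝ) ≤ x := by
      have harg : (k:ℝ) ^ ((3 ^ k - 1 : ℕ)) ≤ (k:ℝ) * N / S := by
        rw [le_div_iff₀ hS0]
        have h1 : S ≤ (k:ℝ) * S' := by
          rw [div_le_iff₀ hk0] at hsum; linarith [hsum]
        have hp : (0:ℝ) < (k:ℝ) ^ ((3 ^ k - 1 : ℕ)) := pow_pos hk0 _
        nlinarith
      calc ((3:ℝ) ^ k - 1 : ℝ) = Real.logb k ((k:ℝ) ^ ((3 ^ k - 1 : ℕ))) := by
            rw [Real.logb_pow, Real.logb_self_eq_one hk1]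
            push_cast [Nat.cast_sub (by omega : 1 ≤ 3 ^ k)]; ring
      _ ≤ x := Real.logb_le_logb_of_le hk1 (pow_pos hk0 _) harg
    have hlb : ((k:ℝ) - 1) ≤ Real.logb 3 x := by
      have h31 : (3:ℝ) ^ ((k - 1 : ℕ)) ≤ x := by
        have : (3:ℝ) ^ ((k - 1 : ℕ)) ≤ (3:ℝ) ^ k - 1 := by
          have he : (3:ℝ) ^ k = 3 * (3:ℝ) ^ ((k - 1 : ℕ)) := by
            rw [← pow_succ']; congr 1; omega
          have hp : (1:ℝ) ≤ (3:ℝ) ^ ((k - 1 : ℕ)) :=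
            one_le_pow₀ (by norm_num)
          nlinarith
        linarith
      calc ((k:ℝ) - 1) = Real.logb 3 ((3:ℝ) ^ ((k - 1 : ℕ))) := by
            rw [Real.logb_pow, Real.logb_self_eq_one (by norm_num)]
            push_cast [Nat.cast_sub (by omega : 1 ≤ k)]; ring
      _ ≤ Real.logb 3 x := Real.logb_le_logb_of_le (by norm_num) (pow_pos (by norm_num) _) h31
    linarith
  · -- both else
    have key : Real.logb 3 x' ≤ 1 + Real.logb 3 x := by
      calc Real.logb 3 x' ≤ Real.logb 3 (3 * x) := by
            apply Real.logb_le_logb_of_le (by norm_num) (by linarith)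
            linarith
      _ = 1 + Real.logb 3 x := by
          have hxne : x ≠ 0 := ne_of_gt (by linarith)
          rw [Real.logb_mul (three_ne_zero) hxne,
            Real.logb_self_eq_one (by norm_num)]
    linarith
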